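/- For all integers m and n, with x = 4(n^2-4mn-4m^2)(5n^2+8mn+4m^2)(7n^2+12mn+4m^2), z = 32n(n+m)(n+2m)(3n+2m)(5n^2+8mn+4m^2), and b = 4(5n^2+8mn+4m^2)^3, the identity x^2 + z^2 = b^2 holds. -/
import Mathlib


theorem stmt_11 (m n x z b : ℤ)
    (hx : x = 4*(n^2-4*m*n-4*m^2)*(5*n^2+8*m*n+4*m^2)*(7*n^2+12*m*n+4*m^2))
    (hz : z = 32*n*(n+m)*(n+2*m)*(3*n+2*m)*(5*n^2+8*m*n+4*m^2))
    (hb : b = 4*(5*n^2+8*m*n+4*m^2)^3) :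
    x^2 + z^2 = b^2 := by subst hx hz hb; ring
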